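/- arXiv:0803.2245 — 2 statements merged into one kernel-verified Lean document; each statement's English description precedes it below -/
import Mathlib

section
/- Let φ be a Schur generator with associated outer function ψ and f₀ := −φ̄ψ/ψ̄, and let Γ := Γ_{f₀} be the Hankel operator with symbol f₀. Then for all y, u ∈ H²: ⟨ψy, ψu⟩_{L²} + ⟨P₊(f₀y), P₊(f₀u)⟩_{L²} = ⟨y, u⟩_{L²} − ⟨Γy, Γu⟩_{L²}. In particular, ‖ψy‖² + ‖P₊(f₀y)‖² = ‖y‖² − ‖Γy‖² for every y ∈ H². -/
open MeasureTheory Complex Filter Finset AddCircle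
open scoped Real ENNReal NNReal ComplexConjugate

noncomputable section

instance : Fact (0 < 2 * Real.pi) := ⟨by positivity⟩

abbrev UC := AddCircle (2 * Real.pi)

abbrev mUC : Measure UC := AddCircle.haarAddCircle

/-- Membership in the Hardy space `H²` of the circle. -/
def MemH2 (f : UC → ℂ) : Prop :=
  MemLp f 2 mUC ∧ ∀ n : ℤ, n < 0 → fourierCoeff f n = 0

/-- Membership in the Hardy space `H^∞` of the circle. -/
def MemHinf (f : UC → ℂ) : Prop :=
  MemLp f ⊤ mUC ∧ ∀ n : ℤ, n < 0 → fourierCoeff f n = 0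

/-- Analytic trigonometric polynomials. -/
def AnalyticPoly (p : UC → ℂ) : Prop :=
  ∃ (N : ℕ) (c : ℕ → ℂ), p = fun t => ∑ n ∈ Finset.range N, c n * fourier (n : ℤ) t

/-- `h ∈ H²` is outer if `h · (analytic polynomials)` is dense in `H²`. -/
def IsOuter (h : UC → ℂ) : Prop :=
  MemH2 h ∧ ∀ f : UC → ℂ, MemH2 f → ∀ ε : ℝ, 0 < ε →
    ∃ p : UC → ℂ, AnalyticPoly p ∧
      eLpNorm (fun t => f t - h t * p t) 2 mUC < ENNReal.ofReal ε

/-- Inner functions: bounded analytic with unimodular boundary values. -/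
def IsInnerFn (Θ : UC → ℂ) : Prop :=
  MemHinf Θ ∧ ∀ᵐ t ∂mUC, ‖Θ t‖ = 1

/-- A Schur generator. -/
def SchurGen (φ : UC → ℂ) : Prop :=
  MemHinf φ ∧ eLpNorm φ ⊤ mUC ≤ 1 ∧
  Integrable (fun t => Real.log (1 - ‖φ t‖)) mUC ∧
  fourierCoeff φ 0 = 0

/-- `ψ` is the outer function associated with `φ`: `|ψ|² = 1 - |φ|²` a.e. and `ψ̂(0) > 0`. -/
def IsAssocOuter (φ ψ : UC → ℂ) : Prop :=
  IsOuter ψ ∧ (∀ᵐ t ∂mUC, ‖ψ t‖ ^ 2 = 1 - ‖φ t‖ ^ 2) ∧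
  0 < (fourierCoeff ψ 0).re ∧ (fourierCoeff ψ 0).im = 0

/-- `f₀ := -φ̄ψ/ψ̄`. -/
def fzero (φ ψ : UC → ℂ) : UC → ℂ := fun t => -(conj (φ t) * ψ t) / conj (ψ t)

/-- Regularity of a Schur generator `φ` (with associated outer function `ψ`). -/
def Regular (φ ψ : UC → ℂ) : Prop :=
  {f : UC → ℂ | MemLp f ⊤ mUC ∧ eLpNorm f ⊤ mUC ≤ 1 ∧
      ∀ n : ℤ, n < 0 → fourierCoeff f n = fourierCoeff (fzero φ ψ) n}
  = {f : UC → ℂ | ∃ E : UC → ℂ, MemHinf E ∧ eLpNorm E ⊤ mUC ≤ 1 ∧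
      f =ᵐ[mUC] fun t => fzero φ ψ t + ψ t ^ 2 * E t / (1 - φ t * E t)}

open scoped Classical in
/-- The Riesz projection `P₊` of an `L²` function, defined (up to a.e. equality) by matching
nonnegative Fourier coefficients. -/
def Pplus (f : UC → ℂ) : UC → ℂ :=
  if h : ∃ g : UC → ℂ, MemLp g 2 mUC ∧ (∀ n : ℤ, n < 0 → fourierCoeff g n = 0) ∧
      ∀ n : ℤ, 0 ≤ n → fourierCoeff g n = fourierCoeff f n
  then h.choose else 0

/-- Membership in `Ȟ_φ`, the closure in `H²(ℂ²)` of `{(ψy, P₊(f₀y)) : y ∈ H²}`. -/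
def InHcheck (ψ f₀ : UC → ℂ) (x₁ x₂ : UC → ℂ) : Prop :=
  MemLp x₁ 2 mUC ∧ MemLp x₂ 2 mUC ∧
  ∀ ε : ℝ, 0 < ε → ∃ y : UC → ℂ, MemH2 y ∧
    eLpNorm (fun t => x₁ t - ψ t * y t) 2 mUC < ENNReal.ofReal ε ∧
    eLpNorm (fun t => x₂ t - Pplus (fun s => f₀ s * y s) t) 2 mUC < ENNReal.ofReal ε

/-- Membership in `Ĥ_φ = H²(ℂ²) ⊖ (φ,ψ)ᵀ H²`. -/
def InHhat (φ ψ : UC → ℂ) (x₁ x₂ : UC → ℂ) : Prop :=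
  MemH2 x₁ ∧ MemH2 x₂ ∧ ∀ y : UC → ℂ, MemH2 y →
    ∫ t, (x₁ t * conj (φ t * y t) + x₂ t * conj (ψ t * y t)) ∂mUC = 0

/-- The Hankel operator `Γ_f = P₋(f ·)` has norm strictly less than `1`. -/
def HankelNormLt1 (f : UC → ℂ) : Prop :=
  ∃ c : ℝ≥0∞, c < 1 ∧ ∀ x : UC → ℂ, MemH2 x →
    eLpNorm (fun t => f t * x t - Pplus (fun s => f s * x s) t) 2 mUC ≤ c * eLpNorm x 2 mUC

/-- Strong regularity: regular and `‖Γ_{f₀}‖ < 1`. -/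
def StronglyRegular (φ ψ : UC → ℂ) : Prop :=
  Regular φ ψ ∧ HankelNormLt1 (fzero φ ψ)

/-- The arc of the circle of length `ℓ` starting at `a`. -/
def arc (a ℓ : ℝ) : Set UC := (fun x : ℝ => (x : UC)) '' Set.Ioo a (a + ℓ)

/-- Muckenhoupt `A₂` condition for a scalar weight on the circle. -/
def IsA2 (w : UC → ℝ) : Prop :=
  ∃ C : ℝ≥0, ∀ a ℓ : ℝ, 0 < ℓ → ℓ ≤ 2 * Real.pi →
    (∫⁻ t in arc a ℓ, ENNReal.ofReal (w t) ∂mUC) *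
      (∫⁻ t in arc a ℓ, (ENNReal.ofReal (w t))⁻¹ ∂mUC) ≤
      (C : ℝ≥0∞) * ENNReal.ofReal (ℓ / (2 * Real.pi)) ^ 2

/-- Normalized average of a function over an arc. -/
def avgArc (F : UC → ℂ) (a ℓ : ℝ) : ℂ :=
  ((ℓ / (2 * Real.pi) : ℝ) : ℂ)⁻¹ * ∫ t in arc a ℓ, F t ∂mUC

/-- The matrix weight `W = [[1, φ], [φ̄, 1]]`. -/
def Wmat (φ : UC → ℂ) (t : UC) : Matrix (Fin 2) (Fin 2) ℂ := !![1, φ t; conj (φ t), 1]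

/-- Its pointwise inverse `W⁻¹ = (1-|φ|²)⁻¹ [[1, -φ], [-φ̄, 1]]`. -/
def WmatInv (φ : UC → ℂ) (t : UC) : Matrix (Fin 2) (Fin 2) ℂ :=
  (((1 - ‖φ t‖ ^ 2 : ℝ) : ℂ))⁻¹ • !![1, -φ t; -conj (φ t), 1]

/-- Entrywise normalized average of a matrix-valued function over an arc. -/
def avgMat (F : UC → Matrix (Fin 2) (Fin 2) ℂ) (a ℓ : ℝ) : Matrix (Fin 2) (Fin 2) ℂ :=
  Matrix.of fun i j => avgArc (fun t => F t i j) a ℓ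

/-- The matrix `A₂` condition for `W = [[1, φ], [φ̄, 1]]`: the entries of `W` and `W⁻¹` are
integrable and `sup_I ‖⟨W⟩_I^{1/2} ⟨W⁻¹⟩_I^{1/2}‖ < ∞`; since
`‖⟨W⟩^{1/2}⟨W⁻¹⟩^{1/2}‖² ≤ tr(⟨W⟩⟨W⁻¹⟩) ≤ 2‖⟨W⟩^{1/2}⟨W⁻¹⟩^{1/2}‖²`, this is expressed via
uniform boundedness of the trace of the product of the averages. -/
def MatrixA2 (φ : UC → ℂ) : Prop :=
  Integrable (fun t => (1 - ‖φ t‖ ^ 2)⁻¹) mUC ∧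
  ∃ C : ℝ, ∀ a ℓ : ℝ, 0 < ℓ → ℓ ≤ 2 * Real.pi →
    (Matrix.trace (avgMat (Wmat φ) a ℓ * avgMat (WmatInv φ) a ℓ)).re ≤ C

/-- The Toeplitz operator `T_v : H² → H²` is invertible (i.e. bijective on `H²`,
up to a.e. equality; its inverse is then automatically bounded). -/
def ToeplitzInvertible (v : UC → ℂ) : Prop :=
  (∀ x : UC → ℂ, MemH2 x →
      Pplus (fun t => v t * x t) =ᵐ[mUC] (fun _ => (0 : ℂ)) → x =ᵐ[mUC] (fun _ => (0 : ℂ))) ∧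
  ∀ z : UC → ℂ, MemH2 z → ∃ x : UC → ℂ, MemH2 x ∧ Pplus (fun t => v t * x t) =ᵐ[mUC] z

section ModelSpaceHelpers

lemma fourierCoeff_congr_ae' {f g : UC → ℂ} (h : f =ᵐ[mUC] g) (n : ℤ) :
    fourierCoeff f n = fourierCoeff g n := by
  unfold fourierCoeff
  exact integral_congr_ae (h.mono fun t ht => by simp only [ht])

lemma integrable_fourier_smul {f : UC → ℂ} (hf : Integrable f mUC) (m : ℤ) :
    Integrable (fun t => (fourier m t : ℂ) * f t) mUC :=
  hf.bdd_mul ((ContinuousMap.continuous (fourier (T := 2*Real.pi) m)).aestronglyMeasurable)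
    (Eventually.of_forall fun t => le_of_eq ((fun _ => Circle.norm_coe _ : ∀ x : UC, ‖fourier m x‖ = 1) t))

lemma fourierCoeff_sub {f g : UC → ℂ} (hf : Integrable f mUC) (hg : Integrable g mUC) (n : ℤ) :
    fourierCoeff (fun t => f t - g t) n = fourierCoeff f n - fourierCoeff g n := by
  unfold fourierCoeff
  simp_rw [smul_eq_mul, mul_sub]
  exact integral_sub (integrable_fourier_smul hf _) (integrable_fourier_smul hg _)

lemma memL2_mul_of_bdd {f g : UC → ℂ} (hf : AEStronglyMeasurable f mUC)
    (hbd : ∀ᵐ t ∂mUC, ‖f t‖ ≤ 1) (hg : MemLp g 2 mUC) :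
    MemLp (fun t => f t * g t) 2 mUC := by
  refine hg.of_le (hf.mul hg.aestronglyMeasurable) ?_
  filter_upwards [hbd] with t ht
  calc ‖f t * g t‖ = ‖f t‖ * ‖g t‖ := by simp
  _ ≤ 1 * ‖g t‖ := by gcongr
  _ = ‖g t‖ := one_mul _

lemma integrable_mul_conj {f g : UC → ℂ} (hf : MemLp f 2 mUC) (hg : MemLp g 2 mUC) :
    Integrable (fun t => f t * conj (g t)) mUC := by
  have h := MeasureTheory.L2.integrable_inner (𝕜 := ℂ) (hg.toLp g) (hf.toLp f)
  refine h.congr ?_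
  filter_upwards [hg.coeFn_toLp, hf.coeFn_toLp] with t h1 h2
  simp [RCLike.inner_apply, h1, h2, mul_comm]

lemma toLp_fourierCoeff {f : UC → ℂ} (hf : MemLp f 2 mUC) (n : ℤ) :
    fourierBasis.repr (hf.toLp f) n = fourierCoeff f n := by
  rw [fourierBasis_repr]
  exact fourierCoeff_congr_ae' hf.coeFn_toLp n

lemma integral_mul_conj_eq_zero {f g : UC → ℂ} (hf : MemLp f 2 mUC) (hg : MemLp g 2 mUC)
    (h : ∀ n : ℤ, fourierCoeff f n = 0 ∨ fourierCoeff g n = 0) :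
    ∫ t, f t * conj (g t) ∂mUC = 0 := by
  have key : (inner ℂ (hg.toLp g) (hf.toLp f) : ℂ) = 0 := by
    have hs := (fourierBasis (T := 2*Real.pi)).hasSum_inner_mul_inner (hg.toLp g) (hf.toLp f)
    have hz : ∀ n : ℤ,
        (inner ℂ (hg.toLp g) (fourierBasis (T := 2*Real.pi) n) : ℂ) *
          inner ℂ (fourierBasis (T := 2*Real.pi) n) (hf.toLp f) = 0 := by
      intro n
      have h1 : (inner ℂ (fourierBasis (T := 2*Real.pi) n) (hf.toLp f) : ℂ) = fourierCoeff f n := by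
        rw [← HilbertBasis.repr_apply_apply, toLp_fourierCoeff]
      have h2 : (inner ℂ (hg.toLp g) (fourierBasis (T := 2*Real.pi) n) : ℂ) =
          conj (fourierCoeff g n) := by
        rw [← inner_conj_symm, ← HilbertBasis.repr_apply_apply, toLp_fourierCoeff]
      rw [h1, h2]
      rcases h n with h0 | h0 <;> simp [h0]
    have h0 : HasSum (fun n : ℤ =>
        (inner ℂ (hg.toLp g) (fourierBasis (T := 2*Real.pi) n) : ℂ) *
          inner ℂ (fourierBasis (T := 2*Real.pi) n) (hf.toLp f)) 0 := by
      rw [funext hz]; exact hasSum_zero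
    exact hs.unique h0
  rw [← key, MeasureTheory.L2.inner_def]
  refine integral_congr_ae ?_
  filter_upwards [hg.coeFn_toLp, hf.coeFn_toLp] with t h1 h2
  simp [RCLike.inner_apply, h1, h2, mul_comm]

lemma pplus_exists {F : UC → ℂ} (hF : MemLp F 2 mUC) :
    ∃ g : UC → ℂ, MemLp g 2 mUC ∧ (∀ n : ℤ, n < 0 → fourierCoeff g n = 0) ∧
      ∀ n : ℤ, 0 ≤ n → fourierCoeff g n = fourierCoeff F n := by
  classical
  set fL := hF.toLp F with hfL
  set c : ℤ → ℂ := fun n => if 0 ≤ n then (fourierBasis (T := 2*Real.pi)).repr fL n else 0 with hc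
  have hmem : Memℓp c 2 := by
    have hd : Memℓp (fun n => (fourierBasis (T := 2*Real.pi)).repr fL n) 2 :=
      lp.memℓp ((fourierBasis (T := 2*Real.pi)).repr fL)
    have hsum := (memℓp_gen_iff (by norm_num : 0 < (2:ℝ≥0∞).toReal)).mp hd
    refine memℓp_gen ?_
    refine Summable.of_nonneg_of_le (fun n => by positivity) (fun n => ?_) hsum
    by_cases h : 0 ≤ n <;> simp [hc, h] <;> positivity
  set gL := (fourierBasis (T := 2*Real.pi)).repr.symm (⟨c, hmem⟩ : lp (fun _ : ℤ => ℂ) 2) with hgL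
  refine ⟨gL, MeasureTheory.Lp.memLp gL, ?_, ?_⟩
  · intro n hn
    have : fourierCoeff (gL : UC → ℂ) n = c n := by
      rw [← fourierBasis_repr, hgL, LinearIsometryEquiv.apply_symm_apply]
    rw [this, hc]
    simp [not_le.mpr hn]
  · intro n hn
    have : fourierCoeff (gL : UC → ℂ) n = c n := by
      rw [← fourierBasis_repr, hgL, LinearIsometryEquiv.apply_symm_apply]
    rw [this, hc]
    simp only [if_pos hn]
    rw [toLp_fourierCoeff]

lemma pplus_spec {F : UC → ℂ} (hF : MemLp F 2 mUC) :
    MemLp (Pplus F) 2 mUC ∧ (∀ n : ℤ, n < 0 → fourierCoeff (Pplus F) n = 0) ∧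
      ∀ n : ℤ, 0 ≤ n → fourierCoeff (Pplus F) n = fourierCoeff F n := by
  have hex := pplus_exists hF
  rw [Pplus, dif_pos hex]
  exact hex.choose_spec

lemma memH2_one : MemH2 (fun _ : UC => (1:ℂ)) := by
  refine ⟨memLp_const 1, fun n hn => ?_⟩
  have h1 : fourierCoeff (fun _ : UC => (1:ℂ)) n = ∫ t, fourier (-n) t ∂mUC := by
    simp [fourierCoeff, smul_eq_mul]
  rw [h1]
  exact integral_eq_zero_of_add_right_eq_neg
    (fourier_add_half_inv_index (by omega : -n ≠ 0) (Fact.out))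

lemma outer_ae_ne_zero {ψ : UC → ℂ} (h : IsOuter ψ) : ∀ᵐ t ∂mUC, ψ t ≠ 0 := by
  obtain ⟨⟨hψ2, _⟩, hdense⟩ := h
  by_contra hcon
  obtain ⟨ψ', hψ'sm, hψψ'⟩ := hψ2.aestronglyMeasurable
  set E : Set UC := ψ' ⁻¹' {0} with hE
  have hEmeas : MeasurableSet E := hψ'sm.measurable (measurableSet_singleton 0)
  have hEpos : 0 < mUC E := by
    rcases eq_or_ne (mUC E) 0 with h0 | h0
    · exfalso; apply hcon
      filter_upwards [hψψ', measure_eq_zero_iff_ae_notMem.mp h0] with t h1 h2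
      rw [h1]; exact h2
    · exact h0.bot_lt
  have hEfin : mUC E ≠ ⊤ := (measure_lt_top mUC E).ne
  set ε : ℝ := Real.sqrt ((mUC E).toReal) with hε
  have hεpos : 0 < ε := Real.sqrt_pos.mpr (ENNReal.toReal_pos hEpos.ne' hEfin)
  obtain ⟨p, _, hlt⟩ := hdense _ memH2_one ε hεpos
  have hrestr0 : mUC.restrict E ≠ 0 := by
    simp only [ne_eq, Measure.restrict_eq_zero]
    exact hEpos.ne'
  have heq : eLpNorm (fun t => (1:ℂ) - ψ t * p t) 2 (mUC.restrict E)
      = eLpNorm (fun _ : UC => (1:ℂ)) 2 (mUC.restrict E) := by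
    refine eLpNorm_congr_ae ?_
    filter_upwards [ae_restrict_of_ae hψψ',
      (ae_restrict_iff' hEmeas).mpr (Eventually.of_forall fun t ht => ht)] with t h1 h2
    have : ψ t = 0 := by rw [h1]; exact h2
    simp [this]
  have hlow : ENNReal.ofReal ε ≤ eLpNorm (fun t => (1:ℂ) - ψ t * p t) 2 mUC := by
    calc ENNReal.ofReal ε = (mUC E) ^ ((1:ℝ)/2) := by
          rw [hε, Real.sqrt_eq_rpow, ← ENNReal.ofReal_rpow_of_nonneg ENNReal.toReal_nonneg
            (by norm_num), ENNReal.ofReal_toReal hEfin]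
    _ = eLpNorm (fun _ : UC => (1:ℂ)) 2 (mUC.restrict E) := by
          rw [eLpNorm_const _ (by norm_num) hrestr0]
          simp [Measure.restrict_apply_univ]
    _ = eLpNorm (fun t => (1:ℂ) - ψ t * p t) 2 (mUC.restrict E) := heq.symm
    _ ≤ eLpNorm (fun t => (1:ℂ) - ψ t * p t) 2 mUC :=
          eLpNorm_mono_measure _ Measure.restrict_le_self
  exact absurd hlt (not_lt.mpr hlow)

lemma fzero_ptwise (a b y u : ℂ) (hb : b ≠ 0) (hab : ‖b‖ ^ 2 = 1 - ‖a‖ ^ 2) :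
    b * y * conj (b * u) + -(conj a * b) / conj b * y * conj (-(conj a * b) / conj b * u)
      = y * conj u := by
  have hb' : conj b ≠ 0 := by simpa using hb
  have h1 : b * conj b = ((‖b‖ ^ 2 : ℝ) : ℂ) := by
    rw [Complex.mul_conj]; norm_cast; exact (Complex.sq_norm b).symm
  have h2 : a * conj a = ((‖a‖ ^ 2 : ℝ) : ℂ) := by
    rw [Complex.mul_conj]; norm_cast; exact (Complex.sq_norm a).symm
  have key : b * conj b + a * conj a = 1 := by
    rw [h1, h2, hab]; push_cast; ring
  have expand : b * y * conj (b * u)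
        + -(conj a * b) / conj b * y * conj (-(conj a * b) / conj b * u)
      = (b * conj b + a * conj a) * (y * conj u) := by
    simp only [map_mul, map_div₀, map_neg, Complex.conj_conj]
    field_simp
  rw [expand, key, one_mul]

lemma norm_sq_integral {f : UC → ℂ} (hf : MemLp f 2 mUC) :
    ∫ t, ‖f t‖ ^ 2 ∂mUC = (∫ t, f t * conj (f t) ∂mUC).re := by
  have h := integral_re (integrable_mul_conj hf hf)
  rw [show (∫ t, f t * conj (f t) ∂mUC).re = RCLike.re (∫ t, f t * conj (f t) ∂mUC) from rfl, ← h]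
  refine integral_congr_ae (Eventually.of_forall fun t => ?_)
  simp only [RCLike.re_to_complex, Complex.mul_conj]
  simp [Complex.normSq_eq_norm_sq, ← Complex.ofReal_pow]

end ModelSpaceHelpers

/-- The model-space identity
`⟨ψy, ψu⟩ + ⟨P₊(f₀y), P₊(f₀u)⟩ = ⟨y, u⟩ - ⟨Γy, Γu⟩`, and in particular
`‖ψy‖² + ‖P₊(f₀y)‖² = ‖y‖² - ‖Γy‖²`. -/
theorem model_space_identity (φ ψ : UC → ℂ)
    (hφ : SchurGen φ) (hψ : IsAssocOuter φ ψ) :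
    (∀ y u : UC → ℂ, MemH2 y → MemH2 u →
      ((∫ t, ψ t * y t * conj (ψ t * u t) ∂mUC) +
        ∫ t, Pplus (fun s => fzero φ ψ s * y s) t *
          conj (Pplus (fun s => fzero φ ψ s * u s) t) ∂mUC) =
      (∫ t, y t * conj (u t) ∂mUC) -
        ∫ t, (fzero φ ψ t * y t - Pplus (fun s => fzero φ ψ s * y s) t) *
          conj (fzero φ ψ t * u t - Pplus (fun s => fzero φ ψ s * u s) t) ∂mUC) ∧
    ∀ y : UC → ℂ, MemH2 y →
      ((∫ t, ‖ψ t * y t‖ ^ 2 ∂mUC) +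
        ∫ t, ‖Pplus (fun s => fzero φ ψ s * y s) t‖ ^ 2 ∂mUC) =
      (∫ t, ‖y t‖ ^ 2 ∂mUC) -
        ∫ t, ‖fzero φ ψ t * y t - Pplus (fun s => fzero φ ψ s * y s) t‖ ^ 2 ∂mUC := by
  obtain ⟨⟨hφmem, _⟩, hφnorm, _, _⟩ := hφ
  obtain ⟨hout, habs, _⟩ := hψ
  have hψmem : MemLp ψ 2 mUC := hout.1.1
  have hψm : AEStronglyMeasurable ψ mUC := hψmem.aestronglyMeasurable
  have hφm : AEStronglyMeasurable φ mUC := hφmem.aestronglyMeasurable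
  have hψne : ∀ᵐ t ∂mUC, ψ t ≠ 0 := outer_ae_ne_zero hout
  have hf0m : AEStronglyMeasurable (fzero φ ψ) mUC := by
    apply aestronglyMeasurable_iff_aemeasurable.mpr
    exact (((Complex.continuous_conj.comp_aestronglyMeasurable hφm).aemeasurable.mul
      hψm.aemeasurable).neg).div
      (Complex.continuous_conj.comp_aestronglyMeasurable hψm).aemeasurable
  have hψle : ∀ᵐ t ∂mUC, ‖ψ t‖ ≤ 1 := by
    filter_upwards [habs] with t ht
    nlinarith [norm_nonneg (ψ t), norm_nonneg (φ t), sq_nonneg (‖φ t‖)]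
  have hf0le : ∀ᵐ t ∂mUC, ‖fzero φ ψ t‖ ≤ 1 := by
    filter_upwards [habs, hψne] with t ht htne
    have hb : ‖ψ t‖ ≠ 0 := by simpa using htne
    have habs0 : ‖fzero φ ψ t‖ = ‖φ t‖ := by
      simp only [fzero, norm_div, norm_neg, norm_mul, Complex.norm_conj]
      field_simp
    rw [habs0]
    nlinarith [norm_nonneg (ψ t), norm_nonneg (φ t), sq_nonneg (‖ψ t‖)]
  have main : ∀ y u : UC → ℂ, MemH2 y → MemH2 u →
      ((∫ t, ψ t * y t * conj (ψ t * u t) ∂mUC) +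
        ∫ t, Pplus (fun s => fzero φ ψ s * y s) t *
          conj (Pplus (fun s => fzero φ ψ s * u s) t) ∂mUC) =
      (∫ t, y t * conj (u t) ∂mUC) -
        ∫ t, (fzero φ ψ t * y t - Pplus (fun s => fzero φ ψ s * y s) t) *
          conj (fzero φ ψ t * u t - Pplus (fun s => fzero φ ψ s * u s) t) ∂mUC := by
    intro y u hy hu
    have hFmem : MemLp (fun s => fzero φ ψ s * y s) 2 mUC :=
      memL2_mul_of_bdd hf0m hf0le hy.1
    have hGmem : MemLp (fun s => fzero φ ψ s * u s) 2 mUC :=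
      memL2_mul_of_bdd hf0m hf0le hu.1
    obtain ⟨hPyMem, hPyNeg, hPyPos⟩ := pplus_spec hFmem
    obtain ⟨hPuMem, hPuNeg, hPuPos⟩ := pplus_spec hGmem
    have hone : (1:ℝ≥0∞) ≤ 2 := one_le_two
    have hFint : Integrable (fun s => fzero φ ψ s * y s) mUC := hFmem.integrable hone
    have hGint : Integrable (fun s => fzero φ ψ s * u s) mUC := hGmem.integrable hone
    have hPyint : Integrable (Pplus (fun s => fzero φ ψ s * y s)) mUC := hPyMem.integrable hone
    have hPuint : Integrable (Pplus (fun s => fzero φ ψ s * u s)) mUC := hPuMem.integrable hone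
    have hGamYmem : MemLp (fun t => fzero φ ψ t * y t
        - Pplus (fun s => fzero φ ψ s * y s) t) 2 mUC := hFmem.sub hPyMem
    have hGamUmem : MemLp (fun t => fzero φ ψ t * u t
        - Pplus (fun s => fzero φ ψ s * u s) t) 2 mUC := hGmem.sub hPuMem
    have hGamYcoeff : ∀ n : ℤ, 0 ≤ n → fourierCoeff (fun t => fzero φ ψ t * y t
        - Pplus (fun s => fzero φ ψ s * y s) t) n = 0 := by
      intro n hn
      rw [fourierCoeff_sub hFint hPyint, hPyPos n hn, sub_self]
    have hGamUcoeff : ∀ n : ℤ, 0 ≤ n → fourierCoeff (fun t => fzero φ ψ t * u t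
        - Pplus (fun s => fzero φ ψ s * u s) t) n = 0 := by
      intro n hn
      rw [fourierCoeff_sub hGint hPuint, hPuPos n hn, sub_self]
    have hcross1 : ∫ t, (fzero φ ψ t * y t - Pplus (fun s => fzero φ ψ s * y s) t)
        * conj (Pplus (fun s => fzero φ ψ s * u s) t) ∂mUC = 0 := by
      refine integral_mul_conj_eq_zero hGamYmem hPuMem fun n => ?_
      rcases lt_or_ge n 0 with h | h
      · exact Or.inr (hPuNeg n h)
      · exact Or.inl (hGamYcoeff n h)
    have hcross2 : ∫ t, Pplus (fun s => fzero φ ψ s * y s) t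
        * conj (fzero φ ψ t * u t - Pplus (fun s => fzero φ ψ s * u s) t) ∂mUC = 0 := by
      refine integral_mul_conj_eq_zero hPyMem hGamUmem fun n => ?_
      rcases lt_or_ge n 0 with h | h
      · exact Or.inl (hPyNeg n h)
      · exact Or.inr (hGamUcoeff n h)
    have i1 := integrable_mul_conj hPyMem hPuMem
    have i2 := integrable_mul_conj hPyMem hGamUmem
    have i3 := integrable_mul_conj hGamYmem hPuMem
    have i4 := integrable_mul_conj hGamYmem hGamUmem
    have hA : ∫ t, (fzero φ ψ t * y t) * conj (fzero φ ψ t * u t) ∂mUC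
        = (∫ t, Pplus (fun s => fzero φ ψ s * y s) t
            * conj (Pplus (fun s => fzero φ ψ s * u s) t) ∂mUC)
          + ∫ t, (fzero φ ψ t * y t - Pplus (fun s => fzero φ ψ s * y s) t)
            * conj (fzero φ ψ t * u t - Pplus (fun s => fzero φ ψ s * u s) t) ∂mUC := by
      have hsplit : ∫ t, (fzero φ ψ t * y t) * conj (fzero φ ψ t * u t) ∂mUC
          = (∫ t, (Pplus (fun s => fzero φ ψ s * y s) t
                * conj (Pplus (fun s => fzero φ ψ s * u s) t)
              + Pplus (fun s => fzero φ ψ s * y s) t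
                * conj (fzero φ ψ t * u t - Pplus (fun s => fzero φ ψ s * u s) t))
            + ((fzero φ ψ t * y t - Pplus (fun s => fzero φ ψ s * y s) t)
                * conj (Pplus (fun s => fzero φ ψ s * u s) t)
              + (fzero φ ψ t * y t - Pplus (fun s => fzero φ ψ s * y s) t)
                * conj (fzero φ ψ t * u t - Pplus (fun s => fzero φ ψ s * u s) t)) ∂mUC) := by
        refine integral_congr_ae (Eventually.of_forall fun t => ?_)
        simp only [map_sub]
        ring
      have i12 : Integrable (fun t => Pplus (fun s => fzero φ ψ s * y s) t
            * conj (Pplus (fun s => fzero φ ψ s * u s) t)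
          + Pplus (fun s => fzero φ ψ s * y s) t
            * conj (fzero φ ψ t * u t - Pplus (fun s => fzero φ ψ s * u s) t)) mUC := i1.add i2
      have i34 : Integrable (fun t => (fzero φ ψ t * y t - Pplus (fun s => fzero φ ψ s * y s) t)
            * conj (Pplus (fun s => fzero φ ψ s * u s) t)
          + (fzero φ ψ t * y t - Pplus (fun s => fzero φ ψ s * y s) t)
            * conj (fzero φ ψ t * u t - Pplus (fun s => fzero φ ψ s * u s) t)) mUC := i3.add i4
      rw [hsplit, integral_add i12 i34, integral_add i1 i2, integral_add i3 i4,
        hcross1, hcross2]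
      ring
    have hψymem : MemLp (fun t => ψ t * y t) 2 mUC := memL2_mul_of_bdd hψm hψle hy.1
    have hψumem : MemLp (fun t => ψ t * u t) 2 mUC := memL2_mul_of_bdd hψm hψle hu.1
    have hB : (∫ t, ψ t * y t * conj (ψ t * u t) ∂mUC)
        + ∫ t, (fzero φ ψ t * y t) * conj (fzero φ ψ t * u t) ∂mUC
        = ∫ t, y t * conj (u t) ∂mUC := by
      rw [← integral_add (integrable_mul_conj hψymem hψumem) (integrable_mul_conj hFmem hGmem)]
      refine integral_congr_ae ?_
      filter_upwards [hψne, habs] with t ht hab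
      simpa [fzero] using fzero_ptwise (φ t) (ψ t) (y t) (u t) ht hab
    linear_combination hB - hA
  refine ⟨main, fun y hy => ?_⟩
  have hFmem : MemLp (fun s => fzero φ ψ s * y s) 2 mUC :=
    memL2_mul_of_bdd hf0m hf0le hy.1
  obtain ⟨hPyMem, -, -⟩ := pplus_spec hFmem
  have hGamYmem : MemLp (fun t => fzero φ ψ t * y t
      - Pplus (fun s => fzero φ ψ s * y s) t) 2 mUC := hFmem.sub hPyMem
  have hψymem : MemLp (fun t => ψ t * y t) 2 mUC := memL2_mul_of_bdd hψm hψle hy.1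
  have hre := congrArg Complex.re (main y y hy hy)
  rw [Complex.add_re, Complex.sub_re] at hre
  rw [norm_sq_integral hψymem, norm_sq_integral hPyMem, norm_sq_integral hy.1,
    norm_sq_integral hGamYmem]
  exact hre


end
end

section
/- Let φ be a Schur generator with associated outer function ψ and f₀ := −φ̄ψ/ψ̄, let Γ := Γ_{f₀} and assume ‖Γ‖ < 1. Define ǩ := ψ̂(0)·(ψ·(I − Γ*Γ)^{−1}1, P₊(f₀·(I − Γ*Γ)^{−1}1))ᵀ, where 1 denotes the constant function. Then for every y ∈ H²: ⟨(ψy, P₊(f₀y))ᵀ, ǩ⟩_{L²(𝕋;ℂ²)} = ψ̂(0)·ŷ(0); that is, ǩ is the reproducing kernel at the origin of the space Ȟ_φ. -/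
open MeasureTheory Complex Filter Finset AddCircle
open scoped Real ENNReal NNReal ComplexConjugate

noncomputable section

namespace RK

lemma integrable2 {f : UC → ℂ} (hf : MemLp f 2 mUC) : Integrable f mUC :=
  hf.integrable (by norm_num)

lemma fc_congr {f g : UC → ℂ} (h : f =ᵐ[mUC] g) (n : ℤ) :
    fourierCoeff f n = fourierCoeff g n :=
  integral_congr_ae (h.mono fun t ht => show fourier (-n) t • f t = fourier (-n) t • g t by
    rw [ht])

lemma norm_fourier (n : ℤ) (t : UC) : ‖fourier n t‖ = 1 := by
  rw [fourier_apply]; exact Circle.norm_coe _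

lemma int_fourier_smul {f : UC → ℂ} (hf : Integrable f mUC) (n : ℤ) :
    Integrable (fun t => fourier n t • f t) mUC := by
  simp_rw [smul_eq_mul]
  exact hf.bdd_mul (c := 1) ((fourier n).continuous.aestronglyMeasurable)
    (ae_of_all _ fun t => le_of_eq (norm_fourier n t))

lemma fc_sub {f g : UC → ℂ} (hf : Integrable f mUC) (hg : Integrable g mUC) (n : ℤ) :
    fourierCoeff (fun t => f t - g t) n = fourierCoeff f n - fourierCoeff g n := by
  have h : (fun t : UC => fourier (-n) t • (f t - g t))
      = fun t => fourier (-n) t • f t - fourier (-n) t • g t := by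
    funext t; rw [smul_sub]
  unfold fourierCoeff
  rw [h, integral_sub (int_fourier_smul hf _) (int_fourier_smul hg _)]

lemma fc_zero (f : UC → ℂ) : fourierCoeff f 0 = ∫ t, f t ∂mUC := by
  unfold fourierCoeff
  rw [neg_zero]
  exact integral_congr_ae (ae_of_all _ fun t =>
    show fourier (0 : ℤ) t • f t = f t by rw [fourier_zero, one_smul])

lemma fourierCoeff_one {n : ℤ} (hn : n ≠ 0) : fourierCoeff (fun _ : UC => (1 : ℂ)) n = 0 := by
  have hm : (-n : ℤ) ≠ 0 := neg_ne_zero.mpr hn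
  unfold fourierCoeff
  simp_rw [smul_eq_mul, mul_one]
  exact integral_eq_zero_of_add_right_eq_neg (μ := mUC)
    (fourier_add_half_inv_index (T := 2 * Real.pi) hm Real.two_pi_pos)

lemma integrable_mul_conj {f g : UC → ℂ} (hf : MemLp f 2 mUC) (hg : MemLp g 2 mUC) :
    Integrable (fun t => f t * conj (g t)) mUC := by
  have h := MeasureTheory.L2.integrable_inner (𝕜 := ℂ) (hg.toLp g) (hf.toLp f)
  refine h.congr ?_
  filter_upwards [hf.coeFn_toLp, hg.coeFn_toLp] with t h1 h2
  rw [RCLike.inner_apply, h1, h2]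

lemma parseval {f g : UC → ℂ} (hf : MemLp f 2 mUC) (hg : MemLp g 2 mUC) :
    ∫ t, f t * conj (g t) ∂mUC = ∑' n : ℤ, fourierCoeff f n * conj (fourierCoeff g n) := by
  have hF := hf.coeFn_toLp
  have hG := hg.coeFn_toLp
  set F := hf.toLp f
  set G := hg.toLp g
  have h1 : (inner ℂ G F : ℂ) = ∫ t, f t * conj (g t) ∂mUC := by
    rw [MeasureTheory.L2.inner_def]
    refine integral_congr_ae ?_
    filter_upwards [hF, hG] with t h1 h2
    rw [RCLike.inner_apply, h1, h2]
  have h2 : (inner ℂ G F : ℂ) = ∑' n : ℤ, conj (fourierCoeff g n) * fourierCoeff f n := by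
    rw [← fourierBasis.repr.inner_map_map G F, lp.inner_eq_tsum]
    refine tsum_congr fun n => ?_
    rw [RCLike.inner_apply, fourierBasis_repr, fourierBasis_repr,
      fc_congr hF n, fc_congr hG n]
    ring
  rw [← h1, h2]
  exact tsum_congr fun n => by ring

lemma ortho {f g : UC → ℂ} (hf : MemLp f 2 mUC) (hg : MemLp g 2 mUC)
    (h : ∀ n : ℤ, fourierCoeff f n = 0 ∨ fourierCoeff g n = 0) :
    ∫ t, f t * conj (g t) ∂mUC = 0 := by
  rw [parseval hf hg]
  have : ∀ n : ℤ, fourierCoeff f n * conj (fourierCoeff g n) = 0 := by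
    intro n
    rcases h n with h' | h' <;> simp [h']
  simp only [this, tsum_zero]

lemma pplus_exists {f : UC → ℂ} (hf : MemLp f 2 mUC) :
    ∃ g : UC → ℂ, MemLp g 2 mUC ∧ (∀ n : ℤ, n < 0 → fourierCoeff g n = 0) ∧
      ∀ n : ℤ, 0 ≤ n → fourierCoeff g n = fourierCoeff f n := by
  set F := hf.toLp f with hFdef
  set a : ℤ → ℂ := fun n => fourierBasis.repr F n with ha
  have hb : Memℓp (fun n : ℤ => if 0 ≤ n then a n else 0) 2 := by
    refine memℓp_gen ?_
    have hsa : Summable fun n : ℤ => ‖a n‖ ^ (2 : ℝ≥0∞).toReal :=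
      (lp.memℓp (fourierBasis.repr F)).summable (by norm_num)
    refine hsa.of_nonneg_of_le (fun n => Real.rpow_nonneg (norm_nonneg _) _) fun n => ?_
    refine Real.rpow_le_rpow (norm_nonneg _) ?_ (by norm_num)
    by_cases h : 0 ≤ n <;> simp [h]
  set G := (fourierBasis (T := 2 * Real.pi)).repr.symm (⟨_, hb⟩ : lp (fun _ : ℤ => ℂ) 2) with hGdef
  have key : ∀ n : ℤ, fourierCoeff (G : UC → ℂ) n = if 0 ≤ n then a n else 0 := by
    intro n
    rw [← fourierBasis_repr, hGdef, LinearIsometryEquiv.apply_symm_apply]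
  refine ⟨G, Lp.memLp G, fun n hn => ?_, fun n hn => ?_⟩
  · rw [key n, if_neg (not_le.mpr hn)]
  · rw [key n, if_pos hn, ha]
    exact (fourierBasis_repr F n).trans (fc_congr hf.coeFn_toLp n)

lemma pplus_spec {f : UC → ℂ} (hf : MemLp f 2 mUC) :
    MemLp (Pplus f) 2 mUC ∧ (∀ n : ℤ, n < 0 → fourierCoeff (Pplus f) n = 0) ∧
      ∀ n : ℤ, 0 ≤ n → fourierCoeff (Pplus f) n = fourierCoeff f n := by
  have h := pplus_exists hf
  rw [Pplus, dif_pos h]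
  exact h.choose_spec

lemma memℒp_bdd_mul {g f : UC → ℂ} (hg : AEStronglyMeasurable g mUC)
    (hgle : ∀ᵐ t ∂mUC, ‖g t‖ ≤ 1) (hf : MemLp f 2 mUC) :
    MemLp (fun t => g t * f t) 2 mUC := by
  refine MemLp.of_le hf (hg.mul hf.aestronglyMeasurable) ?_
  filter_upwards [hgle] with t ht
  rw [norm_mul]
  exact mul_le_of_le_one_left (norm_nonneg _) ht

lemma outer_ae_ne_zero {ψ : UC → ℂ} (h : IsOuter ψ) : ∀ᵐ t ∂mUC, ψ t ≠ 0 := by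
  obtain ⟨⟨hψ2, _⟩, hdense⟩ := h
  have hm := hψ2.aestronglyMeasurable
  have hae : ψ =ᵐ[mUC] hm.mk ψ := hm.ae_eq_mk
  by_contra hcon
  set E : Set UC := (hm.mk ψ) ⁻¹' {0} with hE
  have hEm : MeasurableSet E := hm.stronglyMeasurable_mk.measurable (measurableSet_singleton 0)
  have hne : mUC E ≠ 0 := by
    intro h0
    apply hcon
    have h1 : ∀ᵐ t ∂mUC, hm.mk ψ t ≠ 0 := by
      rw [ae_iff]
      simpa [hE, Set.preimage, Set.mem_singleton_iff] using h0
    filter_upwards [h1, hae] with t h1 h2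
    rw [h2]; exact h1
  have hEfin : mUC E ≠ ⊤ := measure_ne_top _ _
  have hEpos : 0 < (mUC E).toReal := ENNReal.toReal_pos hne hEfin
  obtain ⟨p, -, hp⟩ := hdense (fun _ => 1)
    ⟨memLp_const 1, fun n hn => fourierCoeff_one hn.ne⟩
    (Real.sqrt ((mUC E).toReal)) (Real.sqrt_pos.2 hEpos)
  have hlow : ENNReal.ofReal (Real.sqrt ((mUC E).toReal))
      ≤ eLpNorm (fun t => (fun _ : UC => (1 : ℂ)) t - ψ t * p t) 2 mUC := by
    have h1 : eLpNorm (E.indicator fun _ => (1 : ℂ)) 2 mUC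
        ≤ eLpNorm (fun t => (fun _ : UC => (1 : ℂ)) t - ψ t * p t) 2 mUC := by
      refine eLpNorm_mono_ae ?_
      filter_upwards [hae] with t ht
      by_cases hEt : t ∈ E
      · have hz : ψ t = 0 := by rw [ht]; exact hEt
        simp [Set.indicator_of_mem hEt, hz]
      · simp [Set.indicator_of_notMem hEt]
    rw [eLpNorm_indicator_const hEm (by norm_num) (by norm_num)] at h1
    refine le_trans (le_of_eq ?_) h1
    rw [Real.sqrt_eq_rpow, ← ENNReal.ofReal_rpow_of_nonneg ENNReal.toReal_nonneg (by norm_num),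
      ENNReal.ofReal_toReal hEfin]
    norm_num
  exact absurd (lt_of_le_of_lt hlow hp) (lt_irrefl _)

end RK


set_option maxHeartbeats 1000000 in
/-- If `‖Γ‖ < 1` and `q = (I - Γ*Γ)⁻¹1`, then
`ǩ = ψ̂(0)(ψq, P₊(f₀q))ᵀ` is the reproducing kernel at the origin of `Ȟ_φ`:
`⟨(ψy, P₊(f₀y))ᵀ, ǩ⟩ = ψ̂(0)·ŷ(0)` for all `y ∈ H²`. -/

theorem reproducing_kernel (φ ψ : UC → ℂ)
    (hφ : SchurGen φ) (hψ : IsAssocOuter φ ψ)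
    (hΓ : HankelNormLt1 (fzero φ ψ))
    (q : UC → ℂ) (hq : MemH2 q)
    (hq1 : (fun t => q t - Pplus (fun s => conj (fzero φ ψ s) *
        (fzero φ ψ s * q s - Pplus (fun r => fzero φ ψ r * q r) s)) t)
      =ᵐ[mUC] fun _ => (1 : ℂ)) :
    ∀ y : UC → ℂ, MemH2 y →
      (∫ t, (ψ t * y t * conj (fourierCoeff ψ 0 * (ψ t * q t)) +
        Pplus (fun s => fzero φ ψ s * y s) t *
          conj (fourierCoeff ψ 0 * Pplus (fun s => fzero φ ψ s * q s) t)) ∂mUC) =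
      fourierCoeff ψ 0 * fourierCoeff y 0 := by
  intro y hy
  set f₀ := fzero φ ψ with hf₀def
  set c : ℂ := fourierCoeff ψ 0 with hcdef
  obtain ⟨⟨hφinf, hφnegc⟩, hφnorm, hφlog, hφ0⟩ := hφ
  obtain ⟨hψouter, hψmod, hψre, hψim⟩ := hψ
  have hψ2 : MemLp ψ 2 mUC := hψouter.1.1
  have hψm : AEStronglyMeasurable ψ mUC := hψ2.aestronglyMeasurable
  have hφm : AEStronglyMeasurable φ mUC := hφinf.aestronglyMeasurable
  have hψne : ∀ᵐ t ∂mUC, ψ t ≠ 0 := RK.outer_ae_ne_zero hψouter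
  have hφle : ∀ᵐ t ∂mUC, ‖φ t‖ ≤ 1 := by
    have h1 : ∀ᵐ t ∂mUC, (‖φ t‖₊ : ℝ≥0∞) ≤ eLpNormEssSup φ mUC := ae_le_eLpNormEssSup
    rw [eLpNorm_exponent_top] at hφnorm
    filter_upwards [h1] with t ht
    have h2 : (‖φ t‖₊ : ℝ≥0∞) ≤ 1 := le_trans ht hφnorm
    have h3 : ‖φ t‖₊ ≤ 1 := by exact_mod_cast h2
    rw [← coe_nnnorm]
    exact_mod_cast h3
  have hcmeas : Measurable (conj : ℂ → ℂ) := Complex.continuous_conj.measurable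
  have hconjm : ∀ {f : UC → ℂ}, AEStronglyMeasurable f mUC →
      AEStronglyMeasurable (fun t => conj (f t)) mUC := fun hf =>
    (hcmeas.comp_aemeasurable hf.aemeasurable).aestronglyMeasurable
  have hf₀m : AEStronglyMeasurable f₀ mUC := by
    rw [hf₀def]
    unfold fzero
    apply AEMeasurable.aestronglyMeasurable
    simp only [div_eq_mul_inv]
    exact ((hcmeas.comp_aemeasurable hφm.aemeasurable).mul hψm.aemeasurable).neg.mul
      (hcmeas.comp_aemeasurable hψm.aemeasurable).inv
  have habs0 : ∀ᵐ t ∂mUC, ‖f₀ t‖ = ‖φ t‖ := by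
    filter_upwards [hψne] with t h0
    have hψa : ‖ψ t‖ ≠ 0 := norm_ne_zero_iff.mpr h0
    rw [hf₀def]
    unfold fzero
    rw [norm_div, norm_neg, norm_mul, RCLike.norm_conj, RCLike.norm_conj]
    field_simp
  have hf₀le : ∀ᵐ t ∂mUC, ‖f₀ t‖ ≤ 1 := by
    filter_upwards [habs0, hφle] with t h1 h2
    rw [h1]; exact h2
  have hψle : ∀ᵐ t ∂mUC, ‖ψ t‖ ≤ 1 := by
    filter_upwards [hψmod] with t h1
    have h2 : ‖ψ t‖ ^ 2 ≤ 1 := by nlinarith [norm_nonneg (φ t)]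
    nlinarith [norm_nonneg (ψ t)]
  have hconjf₀le : ∀ᵐ t ∂mUC, ‖conj (f₀ t)‖ ≤ 1 := by
    filter_upwards [hf₀le] with t h1
    rwa [RCLike.norm_conj]
  -- the basic L² functions
  set A : UC → ℂ := fun s => f₀ s * y s with hAdef
  set B : UC → ℂ := fun s => f₀ s * q s with hBdef
  have hA : MemLp A 2 mUC := RK.memℒp_bdd_mul hf₀m hf₀le hy.1
  have hB : MemLp B 2 mUC := RK.memℒp_bdd_mul hf₀m hf₀le hq.1
  have hψy : MemLp (fun t => ψ t * y t) 2 mUC := RK.memℒp_bdd_mul hψm hψle hy.1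
  have hψq : MemLp (fun t => ψ t * q t) 2 mUC := RK.memℒp_bdd_mul hψm hψle hq.1
  set PA := Pplus A with hPAdef
  set PB := Pplus B with hPBdef
  obtain ⟨hPA, hPAneg, hPAnn⟩ := RK.pplus_spec hA
  obtain ⟨hPB, hPBneg, hPBnn⟩ := RK.pplus_spec hB
  set u : UC → ℂ := fun t => A t - PA t with hudef
  set v : UC → ℂ := fun t => B t - PB t with hvdef
  have hu : MemLp u 2 mUC := hA.sub hPA
  have hv : MemLp v 2 mUC := hB.sub hPB
  set w : UC → ℂ := fun s => conj (f₀ s) * (f₀ s * q s - PB s) with hwdef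
  have hweq : w = fun s => conj (f₀ s) * v s := by
    funext s; rw [hwdef, hvdef, hBdef]
  have hw : MemLp w 2 mUC := by
    rw [hweq]; exact RK.memℒp_bdd_mul (hconjm hf₀m) hconjf₀le hv
  set Pw := Pplus w with hPwdef
  obtain ⟨hPw, hPwneg, hPwnn⟩ := RK.pplus_spec hw
  -- coefficient facts
  have hunn : ∀ n : ℤ, 0 ≤ n → fourierCoeff u n = 0 := by
    intro n hn
    rw [hudef, RK.fc_sub (RK.integrable2 hA) (RK.integrable2 hPA), hPAnn n hn, sub_self]
  have hvnn : ∀ n : ℤ, 0 ≤ n → fourierCoeff v n = 0 := by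
    intro n hn
    rw [hvdef, RK.fc_sub (RK.integrable2 hB) (RK.integrable2 hPB), hPBnn n hn, sub_self]
  -- integrability facts
  have iyq := RK.integrable_mul_conj hy.1 hq.1
  have iS1 := RK.integrable_mul_conj hψy hψq
  have iAB := RK.integrable_mul_conj hA hB
  have ipp := RK.integrable_mul_conj hPA hPB
  have ipv := RK.integrable_mul_conj hPA hv
  have iup := RK.integrable_mul_conj hu hPB
  have iuv := RK.integrable_mul_conj hu hv
  have iyw := RK.integrable_mul_conj hy.1 hw
  have iyPw := RK.integrable_mul_conj hy.1 hPw
  -- orthogonality facts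
  have hOpv : ∫ t, PA t * conj (v t) ∂mUC = 0 := by
    refine RK.ortho hPA hv fun n => ?_
    rcases lt_or_ge n 0 with h | h
    · exact Or.inl (hPAneg n h)
    · exact Or.inr (hvnn n h)
  have hOup : ∫ t, u t * conj (PB t) ∂mUC = 0 := by
    refine RK.ortho hu hPB fun n => ?_
    rcases lt_or_ge n 0 with h | h
    · exact Or.inr (hPBneg n h)
    · exact Or.inl (hunn n h)
  -- J1
  have key1 : (fun t => ψ t * y t * conj (ψ t * q t) + A t * conj (B t))
      =ᵐ[mUC] fun t => y t * conj (q t) := by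
    filter_upwards [hψne, hψmod, habs0] with t h0 hmod habs
    have c1 : conj (ψ t) * ψ t = 1 - (‖φ t‖ : ℂ) ^ 2 := by
      rw [mul_comm, Complex.mul_conj, ← Complex.sq_norm, hmod]
      push_cast; ring
    have c2 : conj (f₀ t) * f₀ t = (‖φ t‖ : ℂ) ^ 2 := by
      rw [mul_comm, Complex.mul_conj, ← Complex.sq_norm, habs]
      push_cast; ring
    rw [hAdef, hBdef]
    simp only [map_mul]
    linear_combination (y t * conj (q t)) * (c1 + c2)
  have J1 : (∫ t, ψ t * y t * conj (ψ t * q t) ∂mUC) + (∫ t, A t * conj (B t) ∂mUC)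
      = ∫ t, y t * conj (q t) ∂mUC := by
    rw [← integral_add iS1 iAB]
    exact integral_congr_ae key1
  -- J2
  have J2 : ∫ t, A t * conj (B t) ∂mUC
      = (∫ t, PA t * conj (PB t) ∂mUC) + ∫ t, u t * conj (v t) ∂mUC := by
    have expand : (fun t => A t * conj (B t))
        = fun t => (PA t * conj (PB t) + PA t * conj (v t))
            + (u t * conj (PB t) + u t * conj (v t)) := by
      funext t
      rw [hudef, hvdef]
      simp only [map_sub]
      ring
    have i12 : Integrable (fun t => PA t * conj (PB t) + PA t * conj (v t)) mUC := ipp.add ipv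
    have i34 : Integrable (fun t => u t * conj (PB t) + u t * conj (v t)) mUC := iup.add iuv
    rw [expand, integral_add i12 i34, integral_add ipp ipv,
      integral_add iup iuv, hOpv, hOup, add_zero, zero_add]
  -- J3
  have J3a : ∫ t, y t * conj (w t) ∂mUC = ∫ t, A t * conj (v t) ∂mUC := by
    have e : (fun t => y t * conj (w t)) = fun t => A t * conj (v t) := by
      funext t
      rw [hweq, hAdef]
      simp only [map_mul, Complex.conj_conj]
      ring
    rw [e]
  have J3b : ∫ t, A t * conj (v t) ∂mUC = ∫ t, u t * conj (v t) ∂mUC := by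
    have e : (fun t => A t * conj (v t)) = fun t => PA t * conj (v t) + u t * conj (v t) := by
      funext t
      rw [hudef]
      ring
    rw [e, integral_add ipv iuv, hOpv, zero_add]
  have J3c : ∫ t, y t * conj (w t) ∂mUC = ∫ t, y t * conj (Pw t) ∂mUC := by
    have hz : ∫ t, y t * conj (w t - Pw t) ∂mUC = 0 := by
      refine RK.ortho hy.1 (hw.sub hPw) fun n => ?_
      rcases lt_or_ge n 0 with h | h
      · exact Or.inl (hy.2 n h)
      · refine Or.inr ?_
        rw [RK.fc_sub (RK.integrable2 hw) (RK.integrable2 hPw), hPwnn n h, sub_self]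
    have e : (fun t => y t * conj (w t - Pw t))
        = fun t => y t * conj (w t) - y t * conj (Pw t) := by
      funext t
      rw [map_sub]
      ring
    rw [e, integral_sub iyw iyPw] at hz
    exact sub_eq_zero.mp hz
  -- J4
  have J4 : (∫ t, y t * conj (q t) ∂mUC) - (∫ t, y t * conj (Pw t) ∂mUC)
      = fourierCoeff y 0 := by
    have i1 : ∫ t, y t * conj (q t - Pw t) ∂mUC = fourierCoeff y 0 := by
      rw [RK.fc_zero]
      refine integral_congr_ae ?_
      filter_upwards [hq1] with t ht
      have ht' : q t - Pw t = 1 := ht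
      rw [ht']
      simp
    have e : (fun t => y t * conj (q t - Pw t))
        = fun t => y t * conj (q t) - y t * conj (Pw t) := by
      funext t
      rw [map_sub]
      ring
    rw [e, integral_sub iyq iyPw] at i1
    exact i1
  -- assemble
  have hcc : conj c = c := Complex.conj_eq_iff_im.mpr hψim
  have expand0 : (fun t => ψ t * y t * conj (c * (ψ t * q t)) + PA t * conj (c * PB t))
      = fun t => conj c * (ψ t * y t * conj (ψ t * q t)) + conj c * (PA t * conj (PB t)) := by
    funext t
    simp only [map_mul]
    ring
  have i1 : Integrable (fun t => conj c * (ψ t * y t * conj (ψ t * q t))) mUC :=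
    iS1.const_mul _
  have i2 : Integrable (fun t => conj c * (PA t * conj (PB t))) mUC := ipp.const_mul _
  rw [expand0, integral_add i1 i2, integral_const_mul, integral_const_mul, hcc]
  linear_combination c * J1 - c * J2 + c * J3b + c * J3a - c * J3c + c * J4

end
end
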